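/- Let t = (d_1 − 1, ..., d_n − 1). If two families of constants (α^{(s)}_u) and (α'^{(s)}_u) in F, indexed by s ∈ S and u < m(s), both satisfy f_t = Σ_{s ∈ S} Σ_{u < m(s)} α^{(s)}_u f_u(s) for every polynomial f ∈ F[x_1,...,x_n] with deg f ≤ t_1 + ⋯ + t_n, then α^{(s)}_u = α'^{(s)}_u for all s and u. -/

import Mathlib

open MvPolynomial

/-- The Taylor coefficient `f_u(s)`: the coefficient of `x^u` in `f(x + s)`. -/
noncomputable def taylorCoeff {F : Type*} [Field F] {n : ℕ}
    (f : MvPolynomial (Fin n) F) (s : Fin n → F) (u : Fin n →₀ ℕ) : F :=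
  coeff u (aeval (fun i => X i + C (s i)) f)

/-- Membership in the ideal `I(s, w)`: all Taylor coefficients `f_u(s)` with
`u < w` (componentwise) vanish. -/
def memPointIdeal {F : Type*} [Field F] {n : ℕ}
    (f : MvPolynomial (Fin n) F) (s : Fin n → F) (w : Fin n → ℕ) : Prop :=
  ∀ u : Fin n →₀ ℕ, (∀ i, u i < w i) → taylorCoeff f s u = 0

/-- The polynomial `g_i(x_i) = ∏_{s ∈ S_i} (x_i - s)^{m_i(s)}`. -/
noncomputable def gPoly {F : Type*} [Field F] {n : ℕ}
    (S : Fin n → Finset F) (m : Fin n → F → ℕ) (i : Fin n) : MvPolynomial (Fin n) F :=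
  ∏ s ∈ S i, (X i - C s) ^ m i s

/-- The size `d_i = Σ_{s ∈ S_i} m_i(s)` of the multiset `(S_i, m_i)`. -/
def dSize {F : Type*} {n : ℕ} (S : Fin n → Finset F) (m : Fin n → F → ℕ) (i : Fin n) : ℕ :=
  ∑ s ∈ S i, m i s

section Aux

variable {F : Type*} [Field F]

open scoped Classical in
/-- Univariate Hermite "delta" polynomial: degree `< ∑ m a`, Taylor coefficients
are `1` at `(s₀, u₀)` and `0` at all other relevant pairs. -/
lemma exists_uni_delta (S : Finset F) (m : F → ℕ) (s₀ : F) (hs₀ : s₀ ∈ S)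
    (u₀ : ℕ) (hu₀ : u₀ < m s₀) :
    ∃ p : Polynomial F, p.natDegree + 1 ≤ ∑ a ∈ S, m a ∧
      ∀ a ∈ S, ∀ u : ℕ, u < m a →
        (Polynomial.taylor a p).coeff u = if a = s₀ ∧ u = u₀ then 1 else 0 := by
  classical
  set q : Polynomial F := ∏ a ∈ S.erase s₀, (Polynomial.X - Polynomial.C a) ^ m a with hq
  have hqdeg : q.natDegree = ∑ a ∈ S.erase s₀, m a := by
    rw [hq, Polynomial.natDegree_prod _ _
      (fun a _ => pow_ne_zero _ (Polynomial.X_sub_C_ne_zero a))]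
    exact Finset.sum_congr rfl fun a _ => by
      rw [Polynomial.natDegree_pow, Polynomial.natDegree_X_sub_C, mul_one]
  have hqe : q.eval s₀ ≠ 0 := by
    rw [hq, Polynomial.eval_prod]
    refine Finset.prod_ne_zero_iff.mpr fun a ha => ?_
    simp only [Polynomial.eval_pow, Polynomial.eval_sub, Polynomial.eval_X, Polynomial.eval_C]
    exact pow_ne_zero _ (sub_ne_zero.mpr (Ne.symm (Finset.ne_of_mem_erase ha)))
  set Q : Polynomial F := Polynomial.taylor s₀ q with hQ
  have hQ0 : Q.coeff 0 ≠ 0 := by rw [hQ, Polynomial.taylor_coeff_zero]; exact hqe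
  have hcop : IsCoprime ((Polynomial.X : Polynomial F) ^ m s₀) Q :=
    ((Polynomial.irreducible_X.coprime_iff_not_dvd).mpr
      (fun hdvd => hQ0 (Polynomial.X_dvd_iff.mp hdvd))).pow_left
  obtain ⟨A, B, hAB⟩ := hcop
  set h : Polynomial F := (Polynomial.X ^ u₀ * B) %ₘ (Polynomial.X ^ m s₀) with hh
  have hmono : ((Polynomial.X : Polynomial F) ^ m s₀).Monic := Polynomial.monic_X_pow _
  have hmod : h + Polynomial.X ^ m s₀ * ((Polynomial.X ^ u₀ * B) /ₘ (Polynomial.X ^ m s₀)) =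
      Polynomial.X ^ u₀ * B :=
    Polynomial.modByMonic_add_div _ _
  have key : Q * h - Polynomial.X ^ u₀ =
      Polynomial.X ^ m s₀ * (-(A * Polynomial.X ^ u₀) -
        Q * ((Polynomial.X ^ u₀ * B) /ₘ (Polynomial.X ^ m s₀))) := by
    linear_combination Q * hmod + Polynomial.X ^ u₀ * hAB
  have hdvd : (Polynomial.X : Polynomial F) ^ m s₀ ∣ (Q * h - Polynomial.X ^ u₀) := ⟨_, key⟩
  have hhdeg : h.natDegree + 1 ≤ m s₀ := by
    rcases eq_or_ne h 0 with h0 | h0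
    · rw [h0, Polynomial.natDegree_zero]; omega
    · have hlt := Polynomial.degree_modByMonic_lt (Polynomial.X ^ u₀ * B) hmono
      rw [Polynomial.degree_X_pow] at hlt
      exact Nat.succ_le_of_lt ((Polynomial.natDegree_lt_iff_degree_lt h0).mpr (hh ▸ hlt))
  refine ⟨q * Polynomial.taylor (-s₀) h, ?_, ?_⟩
  · have h1 : (q * Polynomial.taylor (-s₀) h).natDegree ≤
        q.natDegree + (Polynomial.taylor (-s₀) h).natDegree := Polynomial.natDegree_mul_le
    rw [Polynomial.natDegree_taylor, hqdeg] at h1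
    have h2 : (∑ a ∈ S.erase s₀, m a) + m s₀ = ∑ a ∈ S, m a :=
      Finset.sum_erase_add S _ hs₀
    omega
  · intro a ha u hu
    by_cases hcs : a = s₀
    · subst hcs
      have ht : Polynomial.taylor a (q * Polynomial.taylor (-a) h) = Q * h := by
        rw [Polynomial.taylor_mul, Polynomial.taylor_taylor]
        simp [hQ]
      rw [ht]
      have h0 : (Q * h - Polynomial.X ^ u₀).coeff u = 0 :=
        Polynomial.X_pow_dvd_iff.mp hdvd u hu
      rw [Polynomial.coeff_sub, sub_eq_zero] at h0
      rw [h0, Polynomial.coeff_X_pow]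
      simp [eq_comm]
    · have hdq : ((Polynomial.X : Polynomial F) - Polynomial.C a) ^ m a ∣
          q * Polynomial.taylor (-s₀) h :=
        Dvd.dvd.mul_right (Finset.dvd_prod_of_mem _ (Finset.mem_erase.mpr ⟨hcs, ha⟩)) _
      obtain ⟨r, hr⟩ := hdq
      have ht : Polynomial.taylor a (q * Polynomial.taylor (-s₀) h) =
          Polynomial.X ^ m a * Polynomial.taylor a r := by
        rw [hr, Polynomial.taylor_mul]
        congr 1
        rw [Polynomial.taylor_apply, Polynomial.pow_comp]
        simp
      rw [ht, Polynomial.X_pow_dvd_iff.mp (dvd_mul_right _ _) u hu]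
      simp [hcs]

lemma monomial_prod {σ ι : Type*} (t : Finset ι) (v : ι → (σ →₀ ℕ)) (c : ι → F) :
    ∏ i ∈ t, (monomial (v i) (c i) : MvPolynomial σ F) =
      monomial (∑ i ∈ t, v i) (∏ i ∈ t, c i) := by
  classical
  induction t using Finset.induction with
  | empty => simp
  | insert _ _ hx ih =>
      rw [Finset.prod_insert hx, ih, Finset.sum_insert hx, Finset.prod_insert hx,
        monomial_mul]

lemma sum_single_eq {n : ℕ} (k : Fin n → ℕ) :
    (∑ i, Finsupp.single i (k i)) = Finsupp.equivFunOnFinite.symm k := by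
  ext j
  rw [Finset.sum_apply']
  rw [Finset.sum_eq_single j (fun i _ hij => Finsupp.single_eq_of_ne' hij)
    (fun hj => absurd (Finset.mem_univ j) hj)]
  simp

lemma coeff_prod_aevalX {n : ℕ} (q : Fin n → Polynomial F) (u : Fin n → ℕ) :
    MvPolynomial.coeff (Finsupp.equivFunOnFinite.symm u)
      (∏ i, Polynomial.aeval (MvPolynomial.X i) (q i)) = ∏ i, (q i).coeff (u i) := by
  classical
  have hrw : ∀ i : Fin n, Polynomial.aeval (MvPolynomial.X (R := F) i) (q i) =
      ∑ k ∈ Finset.range ((q i).natDegree + 1),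
        MvPolynomial.monomial (Finsupp.single i k) ((q i).coeff k) := by
    intro i
    rw [Polynomial.aeval_eq_sum_range]
    exact Finset.sum_congr rfl fun k _ => by
      rw [MvPolynomial.X_pow_eq_monomial, MvPolynomial.smul_monomial, smul_eq_mul, mul_one]
  simp_rw [hrw]
  rw [Finset.prod_univ_sum, MvPolynomial.coeff_sum]
  have hterm : ∀ k : Fin n → ℕ,
      MvPolynomial.coeff (Finsupp.equivFunOnFinite.symm u)
        (∏ i, MvPolynomial.monomial (Finsupp.single i (k i)) ((q i).coeff (k i))) =
      if k = u then ∏ i, (q i).coeff (u i) else 0 := by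
    intro k
    rw [monomial_prod, sum_single_eq, MvPolynomial.coeff_monomial]
    by_cases hk : k = u
    · subst hk; simp
    · rw [if_neg (fun hc => hk (Finsupp.equivFunOnFinite.symm.injective hc)), if_neg hk]
  simp_rw [hterm]
  rw [Finset.sum_ite_eq' _ u]
  by_cases hu : u ∈ Fintype.piFinset fun i => Finset.range ((q i).natDegree + 1)
  · rw [if_pos hu]
  · rw [if_neg hu]
    have hex : ∃ i, ¬ u i < (q i).natDegree + 1 := by
      by_contra hcon
      push_neg at hcon
      exact hu (Fintype.mem_piFinset.mpr fun i => Finset.mem_range.mpr (hcon i))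
    obtain ⟨i, hi⟩ := hex
    exact (Finset.prod_eq_zero (Finset.mem_univ i)
      (Polynomial.coeff_eq_zero_of_natDegree_lt (by omega))).symm

lemma totalDegree_aevalX_le {n : ℕ} (q : Polynomial F) (i : Fin n) :
    (Polynomial.aeval (MvPolynomial.X (R := F) i) q).totalDegree ≤ q.natDegree := by
  rw [Polynomial.aeval_eq_sum_range]
  refine (MvPolynomial.totalDegree_finset_sum _ _).trans (Finset.sup_le fun k hk => ?_)
  refine (MvPolynomial.totalDegree_smul_le _ _).trans ?_
  rw [MvPolynomial.totalDegree_X_pow]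
  exact Nat.lt_succ_iff.mp (Finset.mem_range.mp hk)

lemma aeval_shift {n : ℕ} (s : Fin n → F) (i : Fin n) (q : Polynomial F) :
    MvPolynomial.aeval (R := F)
      (fun j => MvPolynomial.X j + MvPolynomial.C (s j) : Fin n → MvPolynomial (Fin n) F)
      (Polynomial.aeval (MvPolynomial.X i) q) =
    Polynomial.aeval (MvPolynomial.X i) (Polynomial.taylor (s i) q) := by
  have h1 := Polynomial.aeval_algHom_apply
    (MvPolynomial.aeval (fun j => MvPolynomial.X j + MvPolynomial.C (s j)) :
      MvPolynomial (Fin n) F →ₐ[F] MvPolynomial (Fin n) F)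
    (MvPolynomial.X i) q
  rw [← h1, Polynomial.taylor_apply, Polynomial.aeval_comp]
  simp [MvPolynomial.algebraMap_eq]

end Aux

theorem stmt_9 {F : Type*} [Field F] {n : ℕ} (hn : 1 ≤ n)
    (S : Fin n → Finset F) (hS : ∀ i, (S i).Nonempty)
    (m : Fin n → F → ℕ) (hm : ∀ i, ∀ s ∈ S i, 1 ≤ m i s)
    (α α' : (Fin n → F) → (Fin n → ℕ) → F)
    (hα : ∀ f : MvPolynomial (Fin n) F,
      f.totalDegree ≤ ∑ i, (dSize S m i - 1) →
      coeff (Finsupp.equivFunOnFinite.symm fun i => dSize S m i - 1) f =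
        ∑ s ∈ Fintype.piFinset S,
          ∑ u ∈ Fintype.piFinset (fun i => Finset.range (m i (s i))),
            α s u * taylorCoeff f s (Finsupp.equivFunOnFinite.symm u))
    (hα' : ∀ f : MvPolynomial (Fin n) F,
      f.totalDegree ≤ ∑ i, (dSize S m i - 1) →
      coeff (Finsupp.equivFunOnFinite.symm fun i => dSize S m i - 1) f =
        ∑ s ∈ Fintype.piFinset S,
          ∑ u ∈ Fintype.piFinset (fun i => Finset.range (m i (s i))),
            α' s u * taylorCoeff f s (Finsupp.equivFunOnFinite.symm u)) :
    ∀ s : Fin n → F, (∀ i, s i ∈ S i) →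
      ∀ u : Fin n → ℕ, (∀ i, u i < m i (s i)) → α s u = α' s u := by
  intro s₀ hs₀mem u₀ hu₀lt
  classical
  choose p hpdeg hpcoeff using fun i =>
    exists_uni_delta (S i) (m i) (s₀ i) (hs₀mem i) (u₀ i) (hu₀lt i)
  set f : MvPolynomial (Fin n) F := ∏ i, Polynomial.aeval (MvPolynomial.X i) (p i) with hf
  have hdeg : f.totalDegree ≤ ∑ i, (dSize S m i - 1) := by
    refine (MvPolynomial.totalDegree_finset_prod _ _).trans (Finset.sum_le_sum fun i _ => ?_)
    refine (totalDegree_aevalX_le _ _).trans ?_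
    have h1 := hpdeg i
    unfold dSize at *
    omega
  have hs₀P : s₀ ∈ Fintype.piFinset S := Fintype.mem_piFinset.mpr hs₀mem
  have hu₀P : u₀ ∈ Fintype.piFinset fun i => Finset.range (m i (s₀ i)) :=
    Fintype.mem_piFinset.mpr fun i => Finset.mem_range.mpr (hu₀lt i)
  have htc : ∀ s ∈ Fintype.piFinset S,
      ∀ u ∈ Fintype.piFinset (fun i => Finset.range (m i (s i))),
      taylorCoeff f s (Finsupp.equivFunOnFinite.symm u) =
        if s = s₀ ∧ u = u₀ then 1 else 0 := by
    intro s hs u hu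
    have hprod : taylorCoeff f s (Finsupp.equivFunOnFinite.symm u) =
        ∏ i, (Polynomial.taylor (s i) (p i)).coeff (u i) := by
      unfold taylorCoeff
      rw [hf, map_prod]
      simp_rw [aeval_shift]
      exact coeff_prod_aevalX _ _
    rw [hprod]
    have hterm : ∀ i, (Polynomial.taylor (s i) (p i)).coeff (u i) =
        if s i = s₀ i ∧ u i = u₀ i then 1 else 0 := fun i =>
      hpcoeff i (s i) (Fintype.mem_piFinset.mp hs i) (u i)
        (Finset.mem_range.mp (Fintype.mem_piFinset.mp hu i))
    by_cases hcase : s = s₀ ∧ u = u₀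
    · obtain ⟨h1, h2⟩ := hcase
      subst h1; subst h2
      rw [if_pos ⟨rfl, rfl⟩]
      exact Finset.prod_eq_one fun i _ => by rw [hterm i, if_pos ⟨rfl, rfl⟩]
    · rw [if_neg hcase]
      have hex : ∃ i, ¬ (s i = s₀ i ∧ u i = u₀ i) := by
        by_contra hcon
        push_neg at hcon
        exact hcase ⟨funext fun i => (hcon i).1, funext fun i => (hcon i).2⟩
      obtain ⟨i, hi⟩ := hex
      exact Finset.prod_eq_zero (Finset.mem_univ i) (by rw [hterm i, if_neg hi])
  have hsum : ∀ (β : (Fin n → F) → (Fin n → ℕ) → F),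
      (∑ s ∈ Fintype.piFinset S,
        ∑ u ∈ Fintype.piFinset (fun i => Finset.range (m i (s i))),
          β s u * taylorCoeff f s (Finsupp.equivFunOnFinite.symm u)) = β s₀ u₀ := by
    intro β
    rw [Finset.sum_eq_single s₀]
    · rw [Finset.sum_eq_single u₀]
      · rw [htc s₀ hs₀P u₀ hu₀P, if_pos ⟨rfl, rfl⟩, mul_one]
      · intro u hu hne
        rw [htc s₀ hs₀P u hu, if_neg (fun hc => hne hc.2), mul_zero]
      · intro habs
        exact absurd hu₀P habs
    · intro s hs hne
      refine Finset.sum_eq_zero fun u hu => ?_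
      rw [htc s hs u hu, if_neg (fun hc => hne hc.1), mul_zero]
    · intro habs
      exact absurd hs₀P habs
  have h1 := hα f hdeg
  have h2 := hα' f hdeg
  rw [hsum α] at h1
  rw [hsum α'] at h2
  exact h1.symm.trans h2
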